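/- Let V₀, V₁, …, V_n be vector spaces over a field of characteristic zero. Then the m-th symmetric power of the direct sum decomposes as Sym^m(⊕_{i=0}^n V_i) ≅ ⊕_{κ} ⊗_{j=0}^n Sym^{κ(j)}(V_j), where the sum ranges over all functions κ : {0,…,n} → ℕ with Σ_j κ(j) = m. -/

import Mathlib

open scoped TensorProduct

/-- The `k`-th symmetric power of a module, realized as the quotient of the `k`-th
tensor power by the relations identifying a tensor with its permutations. -/
abbrev SymPow (K : Type*) [CommRing K] (M : Type*) [AddCommGroup M] [Module K M]
    (k : ℕ) :=
  (⨂[K] _ : Fin k, M) ⧸ Submodule.span K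
    {x : ⨂[K] _ : Fin k, M | ∃ (v : Fin k → M) (σ : Equiv.Perm (Fin k)),
      x = PiTensorProduct.tprod K v - PiTensorProduct.tprod K (fun i => v (σ i))}

/- ### Auxiliary material -/

open PiTensorProduct TensorProduct

noncomputable section Aux

lemma exists_perm_of_coe_ofFn_eq {α : Type*} {k : ℕ} {g h : Fin k → α}
    (H : (↑(List.ofFn g) : Multiset α) = ↑(List.ofFn h)) :
    ∃ σ : Equiv.Perm (Fin k), g = h ∘ σ := by
  letI : LinearOrder α := IsWellOrder.linearOrder WellOrderingRel
  have hp : (List.ofFn g).Perm (List.ofFn h) := Quotient.exact H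
  have e : List.ofFn (g ∘ Tuple.sort g) = List.ofFn (h ∘ Tuple.sort h) :=
    List.Perm.eq_of_sortedLE
      (Tuple.monotone_sort g).sortedLE_ofFn (Tuple.monotone_sort h).sortedLE_ofFn
      ((((Tuple.sort g).ofFn_comp_perm g).trans hp).trans
        ((Tuple.sort h).ofFn_comp_perm h).symm)
  have e' : g ∘ Tuple.sort g = h ∘ Tuple.sort h := List.ofFn_injective e
  refine ⟨(Tuple.sort g).symm.trans (Tuple.sort h), funext fun i => ?_⟩
  have := congrFun e' ((Tuple.sort g).symm i)
  simpa using this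

variable {K : Type*} [Field K]

/-- Splitting off the first factor of a `PiTensorProduct` over `Fin (n+1)`. -/
def piTensorSplit {n : ℕ} (M : Fin (n + 1) → Type*) [∀ i, AddCommGroup (M i)]
    [∀ i, Module K (M i)] :
    (⨂[K] i, M i) ≃ₗ[K] M 0 ⊗[K] (⨂[K] i : Fin n, M i.succ) := by
  refine LinearEquiv.ofLinear
    (PiTensorProduct.lift (LinearMap.uncurryLeft
      { toFun := fun x => (TensorProduct.mk K (M 0) (⨂[K] i : Fin n, M i.succ) x).compMultilinearMap
          (tprod K)
        map_add' := fun x y => by ext w; simp [TensorProduct.add_tmul]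
        map_smul' := fun c x => by ext w; simp [TensorProduct.smul_tmul'] }))
    (TensorProduct.lift
      ((PiTensorProduct.lift.toLinearMap).comp (tprod K (s := M)).curryLeft))
    ?_ ?_
  · ext x w
    simp
  · ext v
    simp

@[simp] lemma piTensorSplit_tprod {n : ℕ} (M : Fin (n + 1) → Type*) [∀ i, AddCommGroup (M i)]
    [∀ i, Module K (M i)] (v : ∀ i, M i) :
    piTensorSplit M (tprod K v) = v 0 ⊗ₜ[K] tprod K (fun i : Fin n => v i.succ) := by
  simp [piTensorSplit]; rfl

@[simp] lemma piTensorSplit_symm_tmul {n : ℕ} (M : Fin (n + 1) → Type*) [∀ i, AddCommGroup (M i)]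
    [∀ i, Module K (M i)] (x : M 0) (w : ∀ i : Fin n, M i.succ) :
    (piTensorSplit M).symm (x ⊗ₜ[K] tprod K w) = tprod K (Fin.cons x w) := by
  simp [piTensorSplit]

/-- A basis for a finite `PiTensorProduct` out of bases for the factors. -/
theorem exists_piTensor_basis (n : ℕ) :
    ∀ (M : Fin n → Type u) [∀ i, AddCommGroup (M i)] [∀ i, Module K (M i)]
      (ι : Fin n → Type v) (b : ∀ i, Module.Basis (ι i) K (M i)),
    ∃ B : Module.Basis (∀ i, ι i) K (⨂[K] i, M i),
      ∀ g, B g = tprod K fun i => b i (g i) := by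
  induction n with
  | zero =>
    intro M _ _ ι b
    refine ⟨(Module.Basis.singleton _ K).map (isEmptyEquiv (Fin 0)).symm, fun g => ?_⟩
    simp only [Module.Basis.map_apply, Module.Basis.singleton_apply]
    rw [show (1 : K) = isEmptyEquiv (Fin 0) (tprod K fun i => b i (g i)) by simp]
    rw [LinearEquiv.symm_apply_apply]
  | succ n ih =>
    intro M _ _ ι b
    obtain ⟨B', hB'⟩ := ih (fun i => M i.succ) (fun i => ι i.succ) (fun i => b i.succ)
    refine ⟨(((b 0).tensorProduct B').map (piTensorSplit M).symm).reindex (Fin.consEquiv ι),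
      fun g => ?_⟩
    rw [Module.Basis.reindex_apply, Module.Basis.map_apply]
    have hsymm : (Fin.consEquiv ι).symm g = (g 0, fun i : Fin n => g i.succ) := rfl
    rw [hsymm, Module.Basis.tensorProduct_apply, hB', piTensorSplit_symm_tmul]
    congr 1
    funext i
    refine Fin.cases ?_ (fun j => ?_) i <;> simp

variable {ι : Type v}

/-- The multiset of values of a tuple, as an element of `Sym ι k`. -/
def symContent {k : ℕ} (g : Fin k → ι) : Sym ι k :=
  ⟨(List.ofFn g : Multiset ι), by simp⟩

lemma symContent_comp_perm {k : ℕ} (g : Fin k → ι) (σ : Equiv.Perm (Fin k)) :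
    symContent (fun i => g (σ i)) = symContent g :=
  Subtype.ext (Quot.sound (σ.ofFn_comp_perm g))

/-- A section of `symContent`. -/
def symSec {k : ℕ} (s : Sym ι k) : Fin k → ι :=
  fun i => s.1.toList.get (Fin.cast (by rw [Multiset.length_toList, s.2]) i)

lemma symContent_symSec {k : ℕ} (s : Sym ι k) : symContent (symSec s) = s := by
  refine Subtype.ext ?_
  have h : (s.1.toList).length = k := by rw [Multiset.length_toList, s.2]
  have : List.ofFn (symSec s) = s.1.toList := by
    refine List.ext_get (by simp [h]) fun i h1 h2 => ?_
    simp [symSec, List.get_ofFn]; rfl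
  rw [symContent]
  simp only [this, Multiset.coe_toList]

variable {V : Type u} [AddCommGroup V] [Module K V]

/-- The symmetric power of a module with a basis indexed by `ι` has a basis
indexed by `Sym ι k`. -/
theorem nonempty_symPow_basis (b : Module.Basis ι K V) (k : ℕ) :
    Nonempty (Module.Basis (Sym ι k) K (SymPow K V k)) := by
  classical
  obtain ⟨BT, hBT⟩ := exists_piTensor_basis (K := K) k (fun _ => V) (fun _ => ι) (fun _ => b)
  set Sp : Submodule K (⨂[K] _ : Fin k, V) := Submodule.span K
    {x | ∃ (v : Fin k → V) (σ : Equiv.Perm (Fin k)),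
      x = tprod K v - tprod K (fun i => v (σ i))} with hSp
  let φ₀ : (⨂[K] _ : Fin k, V) →ₗ[K] (Sym ι k →₀ K) :=
    (Finsupp.lmapDomain K K symContent) ∘ₗ (BT.repr : (⨂[K] _ : Fin k, V) →ₗ[K] _)
  have hφ₀ : ∀ g : Fin k → ι, φ₀ (tprod K fun i => b (g i)) =
      Finsupp.single (symContent g) 1 := by
    intro g
    have : tprod K (fun i => b (g i)) = BT g := (hBT g).symm
    simp [φ₀, this, Finsupp.mapDomain_single]
  have key : ∀ (v : Fin k → V) (σ : Equiv.Perm (Fin k)),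
      φ₀ (tprod K fun i => v (σ i)) = φ₀ (tprod K v) := by
    intro v σ
    have hML : (φ₀.compMultilinearMap (tprod K)).domDomCongr σ =
        φ₀.compMultilinearMap (tprod K) := by
      refine Module.Basis.ext_multilinear (fun _ => b) fun g => ?_
      simp only [MultilinearMap.domDomCongr_apply, LinearMap.compMultilinearMap_apply]
      rw [hφ₀, hφ₀, symContent_comp_perm]
    have := congrFun (congrArg (fun F => F.toFun) hML) v
    simpa using this
  have hker : Sp ≤ LinearMap.ker φ₀ := by
    rw [hSp, Submodule.span_le]
    rintro x ⟨v, σ, rfl⟩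
    simp [LinearMap.mem_ker, map_sub, key v σ]
  let φ : SymPow K V k →ₗ[K] (Sym ι k →₀ K) := Submodule.liftQ Sp φ₀ hker
  let ψ : (Sym ι k →₀ K) →ₗ[K] SymPow K V k :=
    Finsupp.linearCombination K
      (fun s => (Submodule.Quotient.mk (tprod K fun i => b (symSec s i)) : SymPow K V k))
  have h1 : φ.comp ψ = LinearMap.id := by
    refine Finsupp.lhom_ext fun s c => ?_
    simp only [LinearMap.comp_apply, LinearMap.id_apply, ψ, Finsupp.linearCombination_single]
    rw [map_smul]
    rw [show φ (Submodule.Quotient.mk (tprod K fun i => b (symSec s i)))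
        = φ₀ (tprod K fun i => b (symSec s i)) from Submodule.liftQ_apply _ _ _]
    rw [hφ₀, symContent_symSec]
    simp [Finsupp.smul_single]
  have h2 : ψ.comp φ = LinearMap.id := by
    refine Submodule.linearMap_qext _ ?_
    refine Module.Basis.ext BT fun g => ?_
    simp only [LinearMap.comp_apply, LinearMap.id_apply, Submodule.mkQ_apply]
    rw [show φ (Submodule.Quotient.mk (BT g)) = φ₀ (BT g) from Submodule.liftQ_apply _ _ _,
      hBT g, hφ₀]
    simp only [ψ, Finsupp.linearCombination_single, one_smul]
    obtain ⟨σ, hσ⟩ := exists_perm_of_coe_ofFn_eq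
      (congrArg Subtype.val (symContent_symSec (symContent g)))
    rw [Submodule.Quotient.eq]
    have : (tprod K fun i => b (symSec (symContent g) i))
        = tprod K (fun i => (fun j => b (g j)) (σ i)) := by
      congr 1; funext i; rw [congrFun hσ i]; rfl
    rw [this]
    have mem : (tprod K (fun i => b (g i)) - tprod K fun i => b (g (σ i))) ∈ Sp :=
      Submodule.subset_span ⟨fun i => b (g i), σ, rfl⟩
    simpa [neg_sub] using neg_mem mem
  exact ⟨Module.Basis.ofRepr (LinearEquiv.ofLinear φ ψ h1 h2)⟩

/- ### Combinatorics of compositions -/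

open Finsupp

lemma toFinsupp_weight {α : Type*} [DecidableEq α] (s : Multiset α) :
    ((Multiset.toFinsupp s).sum fun _ n => n) = Multiset.card s := by
  rw [Finsupp.sum]
  simp only [Multiset.toFinsupp_support, Multiset.toFinsupp_apply]
  exact Multiset.toFinset_sum_count_eq s

def symFinsuppEquiv (α : Type*) (k : ℕ) :
    Sym α k ≃ {f : α →₀ ℕ // (f.sum fun _ n => n) = k} := by
  classical
  exact Equiv.subtypeEquiv Multiset.toFinsupp.toEquiv fun s => by
    rw [show (Multiset.toFinsupp.toEquiv s : α →₀ ℕ) = Multiset.toFinsupp s from rfl,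
      toFinsupp_weight]

def piSubtypeSigmaEquiv {N : ℕ} (A : Fin (N + 1) → Type*) (w : ∀ j, A j → ℕ) (m : ℕ) :
    {g : ∀ j, A j // ∑ j, w j (g j) = m} ≃
      Σ κ : {κ : Fin (N + 1) → ℕ // ∑ j, κ j = m}, ∀ j, {a : A j // w j a = κ.1 j} where
  toFun g := ⟨⟨fun j => w j (g.1 j), g.2⟩, fun j => ⟨g.1 j, rfl⟩⟩
  invFun p := ⟨fun j => (p.2 j).1, by
    rw [Finset.sum_congr rfl fun j _ => (p.2 j).2]
    exact p.1.2⟩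
  left_inv g := Subtype.ext rfl
  right_inv p := by
    obtain ⟨⟨κ, hκ⟩, f⟩ := p
    refine Sigma.ext (Subtype.ext (funext fun j => (f j).2)) ?_
    refine Function.hfunext rfl fun j j' hj => ?_
    obtain rfl : j = j' := heq_iff_eq.mp hj
    exact (Subtype.heq_iff_coe_eq fun a => by
      simp only [show ((⟨⟨fun j => w j ((f j).1), by
        rw [Finset.sum_congr rfl fun j _ => (f j).2]; exact hκ⟩,
        fun j => ⟨(f j).1, rfl⟩⟩ : Σ κ : {κ : Fin (N + 1) → ℕ // ∑ j, κ j = m},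
          ∀ j, {a : A j // w j a = κ.1 j}).fst.1 : Fin (N+1) → ℕ) = fun j => w j ((f j).1)
        from rfl]
      rw [(f j).2]).mpr rfl

lemma sigma_finsupp_weight {N : ℕ} {ι : Fin (N + 1) → Type*} (f : (Σ j, ι j) →₀ ℕ) :
    (f.sum fun _ n => n) =
      ∑ j, ((sigmaFinsuppEquivPiFinsupp f) j).sum fun _ n => n := by
  have hsf : ∀ j, sigmaFinsuppEquivPiFinsupp f j = Finsupp.split f j := fun _ => rfl
  simp only [hsf]
  rw [Finsupp.sigma_sum]
  refine Finset.sum_subset (Finset.subset_univ _) fun j _ hj => ?_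
  have h0 : Finsupp.split f j = 0 := by
    by_contra h
    exact hj ((Finsupp.mem_splitSupport_iff_nonzero f j).mpr h)
  rw [h0, Finsupp.sum_zero_index]

/-- Multisets of size `m` on a finite sigma type decompose according to compositions. -/
def symSigmaEquiv {N : ℕ} (ι : Fin (N + 1) → Type*) (m : ℕ) :
    Sym (Σ j, ι j) m ≃
      Σ κ : {κ : Fin (N + 1) → ℕ // ∑ j, κ j = m}, ∀ j, Sym (ι j) (κ.1 j) :=
  (symFinsuppEquiv _ m).trans <|
    (Equiv.subtypeEquiv sigmaFinsuppEquivPiFinsupp fun f => by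
        rw [sigma_finsupp_weight f]).trans <|
      (piSubtypeSigmaEquiv (fun j => ι j →₀ ℕ) (fun _ f => f.sum fun _ n => n) m).trans <|
        Equiv.sigmaCongrRight fun κ =>
          Equiv.piCongrRight fun j => (symFinsuppEquiv (ι j) (κ.1 j)).symm

end Aux

/-- Decomposition of the symmetric power of a direct sum: over a field of
characteristic zero, `Sym^m(⊕_{i=0}^n V_i)` is isomorphic to the direct sum over all
compositions `κ : {0,…,n} → ℕ` with `∑ κ j = m` of `⊗_{j=0}^n Sym^{κ(j)}(V_j)`. -/
theorem symPow_directSum_decomposition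
    (K : Type) [Field K] [CharZero K] (n m : ℕ)
    (V : Fin (n + 1) → Type) [∀ i, AddCommGroup (V i)] [∀ i, Module K (V i)] :
    Nonempty (SymPow K (∀ i, V i) m ≃ₗ[K]
      DirectSum {κ : Fin (n + 1) → ℕ // ∑ j, κ j = m}
        (fun κ => ⨂[K] j : Fin (n + 1), SymPow K (V j) (κ.1 j))) := by
  classical
  let ι : Fin (n + 1) → Type := fun j => Module.Basis.ofVectorSpaceIndex K (V j)
  let b : ∀ j, Module.Basis (ι j) K (V j) := fun j => Module.Basis.ofVectorSpace K (V j)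
  obtain ⟨BL⟩ := nonempty_symPow_basis (K := K) (Pi.basis b) m
  have Bc : ∀ (j : Fin (n + 1)) (k : ℕ), Module.Basis (Sym (ι j) k) K (SymPow K (V j) k) :=
    fun j k => (nonempty_symPow_basis (b j) k).some
  have BT : ∀ κ : {κ : Fin (n + 1) → ℕ // ∑ j, κ j = m},
      Module.Basis (∀ j, Sym (ι j) (κ.1 j)) K (⨂[K] j, SymPow K (V j) (κ.1 j)) :=
    fun κ => (exists_piTensor_basis (K := K) (n + 1) (fun j => SymPow K (V j) (κ.1 j))
      (fun j => Sym (ι j) (κ.1 j)) (fun j => Bc j (κ.1 j))).choose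
  let BR : Module.Basis (Σ κ : {κ : Fin (n + 1) → ℕ // ∑ j, κ j = m}, ∀ j, Sym (ι j) (κ.1 j)) K
      (DirectSum {κ : Fin (n + 1) → ℕ // ∑ j, κ j = m}
        (fun κ => ⨂[K] j : Fin (n + 1), SymPow K (V j) (κ.1 j))) :=
    DFinsupp.basis fun κ => BT κ
  exact ⟨BL.equiv BR (symSigmaEquiv ι m)⟩
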